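/- Let f be a nonzero real polynomial in n variables with support F ⊆ ℕⁿ, written f(x) = Σ_{ν∈F} c_ν x^ν with c_ν ≠ 0. Let a ∈ ℕⁿ, set m(a) = min_{ν∈F} ⟨a,ν⟩, and let γ(a) = { ν ∈ F : ⟨a,ν⟩ = m(a) } with f_{γ(a)}(x) = Σ_{ν∈γ(a)} c_ν x^ν. Let φ₁, …, φₙ be formal power series over ℝ and define αᵢ(t) = t^{aᵢ}·φᵢ(t). Then in the formal power series f(α₁(t), …, αₙ(t)): (i) the coefficient of t^j vanishes for every j < m(a); and (ii) the coefficient of t^{m(a)} equals f_{γ(a)}(φ₁(0), …, φₙ(0)). -/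

import Mathlib

lemma prod_arc (n : ℕ) (a ν : Fin n → ℕ) (φ : Fin n → PowerSeries ℝ) :
    ∏ i, ((PowerSeries.X : PowerSeries ℝ) ^ (a i) * φ i) ^ (ν i) =
      (PowerSeries.X : PowerSeries ℝ) ^ (∑ i, a i * ν i) * ∏ i, (φ i) ^ (ν i) := by
  rw [← Finset.prod_pow_eq_pow_sum, ← Finset.prod_mul_distrib]
  refine Finset.prod_congr rfl fun i _ => ?_
  rw [mul_pow, pow_mul]

/-- Key substitution identity: for `f(x) = Σ_{ν∈F} c_ν x^ν` and arcs
`αᵢ(t) = t^{aᵢ} φᵢ(t)`, the power series `f(α(t))` has vanishing coefficients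
below `m(a)` and its coefficient of `t^{m(a)}` is `f_{γ(a)}(φ(0))`. -/
theorem substitution_identity (n : ℕ) (F : Finset (Fin n → ℕ)) (hF : F.Nonempty)
    (c : (Fin n → ℕ) → ℝ) (hc : ∀ ν ∈ F, c ν ≠ 0)
    (a : Fin n → ℕ) (φ : Fin n → PowerSeries ℝ)
    (m : ℕ) (hm : m = F.inf' hF fun ν => ∑ i, a i * ν i)
    (fα : PowerSeries ℝ)
    (hfα : fα = ∑ ν ∈ F, PowerSeries.C (c ν) *
      ∏ i, ((PowerSeries.X : PowerSeries ℝ) ^ (a i) * φ i) ^ (ν i)) :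
    (∀ j : ℕ, j < m → PowerSeries.coeff j fα = 0) ∧
    PowerSeries.coeff m fα =
      ∑ ν ∈ F.filter (fun ν => ∑ i, a i * ν i = m),
        c ν * ∏ i, (PowerSeries.coeff 0 (φ i)) ^ (ν i) := by
  have hmle : ∀ ν ∈ F, m ≤ ∑ i, a i * ν i := fun ν hν => by
    rw [hm]; exact Finset.inf'_le _ hν
  have hcoeff : ∀ j : ℕ, PowerSeries.coeff j fα =
      ∑ ν ∈ F, c ν * (if ∑ i, a i * ν i ≤ j then
        PowerSeries.coeff (j - ∑ i, a i * ν i) (∏ i, (φ i) ^ (ν i)) else 0) := by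
    intro j
    rw [hfα, map_sum]
    refine Finset.sum_congr rfl fun ν _ => ?_
    rw [prod_arc, PowerSeries.coeff_C_mul, PowerSeries.coeff_X_pow_mul']
  constructor
  · intro j hj
    rw [hcoeff]
    refine Finset.sum_eq_zero fun ν hν => ?_
    rw [if_neg (not_le.mpr (hj.trans_le (hmle ν hν))), mul_zero]
  · rw [hcoeff]
    rw [Finset.sum_filter]
    refine Finset.sum_congr rfl fun ν hν => ?_
    by_cases h : ∑ i, a i * ν i = m
    · rw [if_pos h, if_pos h.le, h, Nat.sub_self]
      congr 1
      simp [PowerSeries.coeff_zero_eq_constantCoeff, map_prod, map_pow]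
    · rw [if_neg h, if_neg (not_le.mpr (lt_of_le_of_ne (hmle ν hν) (Ne.symm h))), mul_zero]
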